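/- Let M be a conical refinement monoid and define the index Ind_M(x) of x ∈ M as the largest n ∈ ℤ⁺ (or ∞) such that there exists y ∈ M \ {0} with n·y ≤ x (algebraic preordering). Then for all x, y ∈ M: max(Ind_M(x), Ind_M(y)) ≤ Ind_M(x + y) ≤ Ind_M(x) + Ind_M(y). -/
import Mathlib


/-- The refinement property for a commutative monoid. -/
def HasRefinement (M : Type*) [AddCommMonoid M] : Prop :=
  ∀ a₀ a₁ b₀ b₁ : M, a₀ + a₁ = b₀ + b₁ →
    ∃ c₀₀ c₀₁ c₁₀ c₁₁ : M,
      a₀ = c₀₀ + c₀₁ ∧ a₁ = c₁₀ + c₁₁ ∧ b₀ = c₀₀ + c₁₀ ∧ b₁ = c₀₁ + c₁₁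

/-- A commutative monoid is conical if `x + y = 0` implies `x = y = 0`. -/
def Conical (M : Type*) [AddCommMonoid M] : Prop :=
  ∀ x y : M, x + y = 0 → x = 0 ∧ y = 0

/-- The algebraic preordering on a commutative monoid: `x ≤ y` iff `∃ z, x + z = y`. -/
def algLE {M : Type*} [AddCommMonoid M] (x y : M) : Prop := ∃ z, x + z = y

/-- The index of an element `x`: the supremum in `ℕ∞` of all `n` such that `n • y ≤ x`
for some nonzero `y`. -/
noncomputable def indexM {M : Type*} [AddCommMonoid M] (x : M) : ℕ∞ :=
  sSup ((fun n : ℕ => (n : ℕ∞)) '' {n : ℕ | ∃ y : M, y ≠ 0 ∧ algLE (n • y) x})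

lemma algLE_trans {M : Type*} [AddCommMonoid M] {a b c : M}
    (h1 : algLE a b) (h2 : algLE b c) : algLE a c := by
  obtain ⟨u, rfl⟩ := h1; obtain ⟨v, rfl⟩ := h2; exact ⟨u + v, (add_assoc _ _ _).symm⟩

lemma algLE_add {M : Type*} [AddCommMonoid M] {a b c d : M}
    (h1 : algLE a b) (h2 : algLE c d) : algLE (a + c) (b + d) := by
  obtain ⟨u, rfl⟩ := h1; obtain ⟨v, rfl⟩ := h2; exact ⟨u + v, by abel⟩

lemma algLE_smul {M : Type*} [AddCommMonoid M] (s : ℕ) {a b : M}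
    (h : algLE a b) : algLE (s • a) (s • b) := by
  obtain ⟨u, rfl⟩ := h; exact ⟨s • u, (smul_add s a u).symm⟩

lemma algLE_decomp {M : Type*} [AddCommMonoid M] (hr : HasRefinement M) {a x y : M}
    (h : algLE a (x + y)) : ∃ u v, a = u + v ∧ algLE u x ∧ algLE v y := by
  obtain ⟨w, hw⟩ := h
  obtain ⟨c00, c01, c10, c11, h1, _, h3, h4⟩ := hr a w x y hw
  exact ⟨c00, c01, h1, ⟨c10, h3.symm⟩, ⟨c11, h4.symm⟩⟩

lemma keyC {M : Type*} [AddCommMonoid M] (hc : Conical M) (hr : HasRefinement M)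
    (k : ℕ) {z : M} (hz : z ≠ 0) : ∀ x y : M, algLE (k • z) (x + y) →
    ∃ w : M, w ≠ 0 ∧ algLE w z ∧
      ∃ s t : ℕ, s + t = k ∧ algLE (s • w) x ∧ algLE (t • w) y := by
  induction k with
  | zero =>
    intro x y _
    exact ⟨z, hz, ⟨0, add_zero z⟩, 0, 0, rfl, ⟨x, by simp⟩, ⟨y, by simp⟩⟩
  | succ k ih =>
    intro x y h
    obtain ⟨r, hrr⟩ := h
    have heq : z + (k • z + r) = x + y := by
      rw [← hrr, succ_nsmul']; abel
    obtain ⟨u, v, c10, c11, hzuv, hrest, hx, hy⟩ := hr z (k • z + r) x y heq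
    have hk : algLE (k • z) (c10 + c11) := ⟨r, hrest⟩
    obtain ⟨w, hw0, hwz, s, t, hst, hsw, htw⟩ := ih c10 c11 hk
    have hwuv : algLE w (u + v) := hzuv ▸ hwz
    obtain ⟨p, q, hwpq, hpu, hqv⟩ := algLE_decomp hr hwuv
    have hpw : algLE p w := ⟨q, hwpq.symm⟩
    have hqw : algLE q w := ⟨p, by rw [add_comm]; exact hwpq.symm⟩
    by_cases hp : p = 0
    · have hq : q ≠ 0 := by
        intro hq; apply hw0; rw [hwpq, hp, hq, add_zero]
      refine ⟨q, hq, algLE_trans hqw hwz, s, t + 1, by omega, ?_, ?_⟩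
      · exact algLE_trans (algLE_smul s hqw)
          (algLE_trans hsw ⟨u, by rw [add_comm]; exact hx.symm⟩)
      · have h1 : algLE (t • q + q) (c11 + v) :=
          algLE_add (algLE_trans (algLE_smul t hqw) htw) hqv
        rw [succ_nsmul]
        exact algLE_trans h1 ⟨0, by rw [add_zero, add_comm]; exact hy.symm⟩
    · refine ⟨p, hp, algLE_trans hpw hwz, s + 1, t, by omega, ?_, ?_⟩
      · have h1 : algLE (s • p + p) (c10 + u) :=
          algLE_add (algLE_trans (algLE_smul s hpw) hsw) hpu
        rw [succ_nsmul]
        exact algLE_trans h1 ⟨0, by rw [add_zero, add_comm]; exact hx.symm⟩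
      · exact algLE_trans (algLE_smul t hpw)
          (algLE_trans htw ⟨v, by rw [add_comm]; exact hy.symm⟩)

theorem stmt6 {M : Type*} [AddCommMonoid M]
    (hc : Conical M) (hr : HasRefinement M) (x y : M) :
    max (indexM x) (indexM y) ≤ indexM (x + y) ∧
      indexM (x + y) ≤ indexM x + indexM y := by
  constructor
  · apply max_le
    · apply sSup_le_sSup
      apply Set.image_mono
      rintro n ⟨z, hz, hle⟩
      exact ⟨z, hz, algLE_trans hle ⟨y, rfl⟩⟩
    · apply sSup_le_sSup
      apply Set.image_mono
      rintro n ⟨z, hz, hle⟩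
      exact ⟨z, hz, algLE_trans hle ⟨x, add_comm y x⟩⟩
  · apply sSup_le
    rintro a ⟨n, ⟨z, hz, hle⟩, rfl⟩
    obtain ⟨w, hw0, -, s, t, hst, hsw, htw⟩ := keyC hc hr n hz x y hle
    have h1 : (s : ℕ∞) ≤ indexM x := le_sSup ⟨s, ⟨w, hw0, hsw⟩, rfl⟩
    have h2 : (t : ℕ∞) ≤ indexM y := le_sSup ⟨t, ⟨w, hw0, htw⟩, rfl⟩
    calc ((n : ℕ) : ℕ∞) = (s : ℕ∞) + t := by rw [← hst]; push_cast; ring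
    _ ≤ indexM x + indexM y := add_le_add h1 h2
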